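/- For every integer n ≥ 1, the total domination number of the n-dimensional hypercube equals its total restrained domination number: γ_t(Q_n) = γ_tr(Q_n). -/

import Mathlib

open SimpleGraph

/-- The complete graph on two vertices. -/
abbrev K2 : SimpleGraph (Fin 2) := ⊤

/-- `S` is a dominating set of `G`: every vertex not in `S` is adjacent to a vertex of `S`. -/
def IsDominatingSet {V : Type*} (G : SimpleGraph V) (S : Finset V) : Prop :=
  ∀ v : V, v ∉ S → ∃ u ∈ S, G.Adj v u

/-- `S` is a total dominating set of `G`: every vertex is adjacent to a vertex of `S`. -/
def IsTotalDominatingSet {V : Type*} (G : SimpleGraph V) (S : Finset V) : Prop :=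
  ∀ v : V, ∃ u ∈ S, G.Adj v u

/-- The domination number of `G`. -/
noncomputable def dominationNumber {V : Type*} (G : SimpleGraph V) : ℕ :=
  sInf {n : ℕ | ∃ S : Finset V, IsDominatingSet G S ∧ S.card = n}

/-- The total domination number of `G`. -/
noncomputable def totalDominationNumber {V : Type*} (G : SimpleGraph V) : ℕ :=
  sInf {n : ℕ | ∃ S : Finset V, IsTotalDominatingSet G S ∧ S.card = n}

/-- `S` is a total restrained dominating set of `G`: every vertex is adjacent to a vertex
of `S`, and every vertex outside `S` has a neighbor outside `S`. -/
def IsTotalRestrainedDominatingSet {V : Type*} (G : SimpleGraph V) (S : Finset V) : Prop :=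
  (∀ v : V, ∃ u ∈ S, G.Adj v u) ∧ ∀ v : V, v ∉ S → ∃ u : V, u ∉ S ∧ G.Adj v u

/-- The total restrained domination number of `G`. -/
noncomputable def totalRestrainedDominationNumber {V : Type*} (G : SimpleGraph V) : ℕ :=
  sInf {n : ℕ | ∃ S : Finset V, IsTotalRestrainedDominatingSet G S ∧ S.card = n}

/-- The `n`-dimensional hypercube: vertices are binary strings of length `n`,
two vertices are adjacent iff they differ in exactly one coordinate. -/
def hypercube (n : ℕ) : SimpleGraph (Fin n → Bool) where
  Adj x y := hammingDist x y = 1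
  symm := ⟨fun x y h => by simpa [hammingDist_comm] using h⟩
  loopless := ⟨fun x h => by simp [hammingDist_self] at h⟩



namespace HCaux

variable {n : ℕ}

/-- Flip coordinate `i`. -/
def flp (x : Fin n → Bool) (i : Fin n) : Fin n → Bool := fun j => if j = i then !(x j) else x j

lemma flp_self (x : Fin n → Bool) (i : Fin n) : flp x i i = !(x i) := by simp [flp]

lemma flp_ne (x : Fin n → Bool) {i j : Fin n} (h : j ≠ i) : flp x i j = x j := by simp [flp, h]

lemma flp_flp (x : Fin n → Bool) (i : Fin n) : flp (flp x i) i = x := by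
  funext j; by_cases h : j = i <;> simp [flp, h]

lemma adj_flp (x : Fin n → Bool) (i : Fin n) : (hypercube n).Adj x (flp x i) := by
  show hammingDist x (flp x i) = 1
  rw [hammingDist, Finset.card_eq_one]
  refine ⟨i, ?_⟩
  ext j
  by_cases h : j = i <;> simp [flp, h]

lemma adj_iff {x y : Fin n → Bool} : (hypercube n).Adj x y ↔ ∃ i, y = flp x i := by
  constructor
  · intro h
    rw [show ((hypercube n).Adj x y) = (hammingDist x y = 1) from rfl, hammingDist,
      Finset.card_eq_one] at h
    obtain ⟨i, hi⟩ := h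
    refine ⟨i, funext fun j => ?_⟩
    by_cases hj : j = i
    · subst hj
      have : x j ≠ y j := by
        have : j ∈ ({j} : Finset (Fin n)) := Finset.mem_singleton_self j
        rw [← hi] at this; simpa using this
      rw [flp_self]
      cases hx : x j <;> cases hy : y j <;> simp_all
    · have : j ∉ ({i} : Finset (Fin n)) := by simpa using hj
      rw [← hi] at this
      simp only [Finset.mem_filter, Finset.mem_univ, true_and, not_not] at this
      rw [flp_ne _ hj, this]
  · rintro ⟨i, rfl⟩; exact adj_flp x i

lemma flp_flp_flp (v : Fin n → Bool) (i j : Fin n) :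
    flp (flp (flp v i) j) i = flp v j := by
  funext k
  by_cases hk : k = i <;> by_cases hk' : k = j <;> simp_all [flp]

/-- Distinct flips of the same vertex are distinct. -/
lemma flp_ne_flp (v : Fin n → Bool) {i j : Fin n} (h : i ≠ j) : flp v i ≠ flp v j := by
  intro he
  have h1 := congrFun he i
  rw [flp_self, flp_ne v h] at h1
  exact Bool.not_ne_self (v i) h1

/-- Main combinatorial step: if all neighbors of `v ∉ S` lie in `S` and `n ≥ 2`,
then removing any neighbor of `v` from `S` keeps it total dominating. -/
lemma erase_tds (hn : 2 ≤ n) (S : Finset (Fin n → Bool))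
    (hS : IsTotalDominatingSet (hypercube n) S)
    {v : Fin n → Bool} (hbad : ∀ i, flp v i ∈ S) (i₀ : Fin n) :
    IsTotalDominatingSet (hypercube n) (S.erase (flp v i₀)) := by
  have : Nontrivial (Fin n) := Fin.nontrivial_iff_two_le.mpr hn
  intro x
  obtain ⟨b, hbS, hadj⟩ := hS x
  by_cases hbu : b = flp v i₀
  · rw [hbu] at hadj
    obtain ⟨j, hj⟩ := adj_iff.mp hadj   -- flp v i₀ = flp x j
    have hx : x = flp (flp v i₀) j := by rw [hj, flp_flp]
    by_cases hji : j = i₀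
    · have hxv : x = v := by rw [hx, hji, flp_flp]
      obtain ⟨j', hj'⟩ := exists_ne i₀
      refine ⟨flp v j', Finset.mem_erase.mpr ⟨flp_ne_flp v hj', hbad j'⟩, ?_⟩
      rw [hxv]; exact adj_flp v j'
    · refine ⟨flp v j, Finset.mem_erase.mpr ⟨flp_ne_flp v hji, hbad j⟩, ?_⟩
      have h2 : flp x i₀ = flp v j := by rw [hx, flp_flp_flp]
      rw [← h2]; exact adj_flp x i₀
  · exact ⟨b, Finset.mem_erase.mpr ⟨hbu, hbS⟩, hadj⟩

end HCaux

open HCaux in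
theorem totalDomination_eq_totalRestrainedDomination_hypercube' (n : ℕ) (hn : 1 ≤ n) :
    totalDominationNumber (hypercube n) = totalRestrainedDominationNumber (hypercube n) := by
  classical
  have hpos : 0 < n := hn
  have huniv : IsTotalDominatingSet (hypercube n) (Finset.univ) := fun v =>
    ⟨flp v ⟨0, hpos⟩, Finset.mem_univ _, adj_flp v _⟩
  have hunivR : IsTotalRestrainedDominatingSet (hypercube n) Finset.univ :=
    ⟨huniv, fun v hv => absurd (Finset.mem_univ v) hv⟩
  have hAne : {m : ℕ | ∃ S : Finset (Fin n → Bool),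
      IsTotalDominatingSet (hypercube n) S ∧ S.card = m}.Nonempty :=
    ⟨_, Finset.univ, huniv, rfl⟩
  have hBne : {m : ℕ | ∃ S : Finset (Fin n → Bool),
      IsTotalRestrainedDominatingSet (hypercube n) S ∧ S.card = m}.Nonempty :=
    ⟨_, Finset.univ, hunivR, rfl⟩
  have h1 : totalDominationNumber (hypercube n) ≤ totalRestrainedDominationNumber (hypercube n) := by
    obtain ⟨T, hT, hTc⟩ := Nat.sInf_mem hBne
    exact Nat.sInf_le ⟨T, hT.1, hTc⟩
  obtain ⟨S, hS, hSc⟩ := Nat.sInf_mem hAne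
  have hrestr : ∀ v : Fin n → Bool, v ∉ S → ∃ u, u ∉ S ∧ (hypercube n).Adj v u := by
    intro v hv
    by_contra hcon
    push_neg at hcon
    have hbad : ∀ i, flp v i ∈ S := fun i => by
      by_contra h; exact hcon _ h (adj_flp v i)
    rcases Nat.lt_or_ge n 2 with h2 | h2
    · have hn1 : n = 1 := by omega
      subst hn1
      obtain ⟨b, hbS, hadj⟩ := hS (flp v 0)
      obtain ⟨j, hj⟩ := adj_iff.mp hadj
      have hj0 : j = 0 := Subsingleton.elim _ _
      rw [hj0, flp_flp] at hj
      exact hv (hj ▸ hbS)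
    · have h3 := erase_tds h2 S hS hbad ⟨0, hpos⟩
      have hcard : (S.erase (flp v ⟨0, hpos⟩)).card = S.card - 1 :=
        Finset.card_erase_of_mem (hbad _)
      have hle : totalDominationNumber (hypercube n) ≤ S.card - 1 :=
        Nat.sInf_le ⟨_, h3, hcard⟩
      have hSpos : 0 < S.card :=
        Finset.card_pos.mpr (by obtain ⟨b, hbS, _⟩ := hS v; exact ⟨b, hbS⟩)
      have hSc' : S.card = totalDominationNumber (hypercube n) := hSc
      omega
  exact le_antisymm h1 (Nat.sInf_le ⟨S, ⟨hS, hrestr⟩, hSc⟩)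


/-- For every `n ≥ 1`, `γ_t(Q_n) = γ_tr(Q_n)`. -/
theorem totalDomination_eq_totalRestrainedDomination_hypercube (n : ℕ) (hn : 1 ≤ n) :
    totalDominationNumber (hypercube n) = totalRestrainedDominationNumber (hypercube n) :=
  totalDomination_eq_totalRestrainedDomination_hypercube' n hn
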